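/- Fix integers k ≥ 2 and n ≥ 3. Let K be the graph with vertex set {a, b, v₁, ..., v_{n-1}} where v₁,...,v_{n-1} form a clique, a is adjacent to v₁,...,v_{n-2}, and b is adjacent to v_{n-1}. For integers 0 ≤ x, y ≤ kn - 2, there exists a (kn-1, k)-coloring c of K with c(a) = x and c(b) = y if and only if x ≠ y. -/

import Mathlib

/-- A `(p,q)`-circular coloring of `G`: colors in `{0,…,p-1}` with
`q ≤ |c x - c y| ≤ p - q` on every edge. -/
def IsCircColoring {V : Type*} (G : SimpleGraph V) (p q : ℕ) (c : V → ℕ) : Prop :=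
  (∀ v, c v < p) ∧ ∀ ⦃x y⦄, G.Adj x y →
    (q : ℤ) ≤ |(c x : ℤ) - (c y : ℤ)| ∧ |(c x : ℤ) - (c y : ℤ)| ≤ (p : ℤ) - (q : ℤ)

/-- The circular chromatic number: `inf { p/q : G has a (p,q)-coloring }`. -/
noncomputable def circChrom {V : Type*} (G : SimpleGraph V) : ℝ :=
  sInf {r : ℝ | ∃ p q : ℕ, 0 < p ∧ 0 < q ∧ r = (p : ℝ) / (q : ℝ) ∧
    ∃ c : V → ℕ, IsCircColoring G p q c}

/-- The arc relation of the digraph `D_c(G)` associated to a `(p,q)`-coloring `c`: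
an arc `x → y` for every edge `xy` with `c y - c x ≡ q (mod p)`. -/
def DArc {V : Type*} (G : SimpleGraph V) (p q : ℕ) (c : V → ℕ) (x y : V) : Prop :=
  G.Adj x y ∧ ((c y : ℤ) - (c x : ℤ)) % (p : ℤ) = (q : ℤ) % (p : ℤ)

/-- A relation (digraph) is acyclic: no directed cycle, i.e. no vertex reaches
itself by a nontrivial directed path. -/
def Acyclic {V : Type*} (R : V → V → Prop) : Prop :=
  ∀ v, ¬ Relation.TransGen R v v

/-- A `(p,1)`-coloring viewed as a proper coloring with colors in `ZMod p`. -/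
def IsProperZ {V : Type*} (p : ℕ) (G : SimpleGraph V) (c : V → ZMod p) : Prop :=
  ∀ ⦃x y⦄, G.Adj x y → c x ≠ c y

/-- Arc relation of `D_c(G)` for a `(p,1)`-coloring with colors in `ZMod p`:
an arc `x → y` for every edge `xy` with `c y - c x = 1`. -/
def ZArc {V : Type*} {p : ℕ} (G : SimpleGraph V) (c : V → ZMod p) (x y : V) : Prop :=
  G.Adj x y ∧ c y - c x = 1

/-- `K⁻`: the complete graph on `{0,1,2,3}` (with `v₁ = 0`, `v₂ = 1`, `v₃ = 2`,
`v₄ = 3`) minus the edge `{0,1}`. -/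
def Kminus : SimpleGraph (Fin 4) :=
  SimpleGraph.fromRel (fun x y => ¬((x = 0 ∧ y = 1) ∨ (x = 1 ∧ y = 0)))

/-- Edge list of the gadget `H`: vertices `a = 0`, `b = 1`, `c = 2`, `d = 3`,
and four copies of `K⁻` with terminal pairs `(a,d), (d,b), (b,c), (c,a)` whose
internal vertex pairs are `(4,5), (6,7), (8,9), (10,11)`, together with the
edges `ad, db, bc, ca`. -/
def HEdges : List (Fin 12 × Fin 12) :=
  [(0,4),(0,5),(3,4),(3,5),(4,5),
   (3,6),(3,7),(1,6),(1,7),(6,7),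
   (1,8),(1,9),(2,8),(2,9),(8,9),
   (2,10),(2,11),(0,10),(0,11),(10,11),
   (0,3),(3,1),(1,2),(2,0)]

/-- The gadget graph `H`. -/
def HGraph : SimpleGraph (Fin 12) :=
  SimpleGraph.fromRel (fun x y => (x, y) ∈ HEdges)

/-- The gadget graph `K` for parameters `k, n`: vertices `a = 0`, `b = 1`, and
`vᵢ = i + 1` for `1 ≤ i ≤ n - 1`; the `vᵢ` form a clique, `a` is adjacent to
`v₁, …, v_{n-2}` and `b` is adjacent to `v_{n-1}`. -/
def Kgadget (n : ℕ) : SimpleGraph (Fin (n + 1)) :=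
  SimpleGraph.fromRel (fun x y =>
    (2 ≤ x.val ∧ 2 ≤ y.val) ∨ (x.val = 0 ∧ 2 ≤ y.val ∧ y.val ≤ n - 1) ∨
      (x.val = 1 ∧ y.val = n))

/-- `o` orients every edge of `G'` (chooses exactly one direction for each edge). -/
def Orients {V : Type*} (G' : SimpleGraph V) (o : V → V → Prop) : Prop :=
  ∀ ⦃u v⦄, G'.Adj u v → (o u v ↔ ¬ o v u)

/-- The graph obtained from `G'` by replacing every edge `uv` (oriented by `o`)
by a copy of the gadget `(Hg; ta, tb)`: `u` is identified with `ta`, `v` with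
`tb`, and the internal vertices of the copy for the edge `uv` are the vertices
`(u, v, i)`. -/
def replaceEdges {V W : Type*} (G' : SimpleGraph V) (o : V → V → Prop)
    (Hg : SimpleGraph W) (ta tb : W) :
    SimpleGraph (V ⊕ (V × V × {w : W // w ≠ ta ∧ w ≠ tb})) :=
  SimpleGraph.fromRel (fun z w =>
    match z, w with
    | Sum.inl u, Sum.inl v => G'.Adj u v ∧ Hg.Adj ta tb
    | Sum.inl u, Sum.inr (x, y, i) =>
        G'.Adj x y ∧ o x y ∧ ((u = x ∧ Hg.Adj ta i.1) ∨ (u = y ∧ Hg.Adj tb i.1))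
    | Sum.inr (x, y, i), Sum.inr (x', y', j) =>
        x = x' ∧ y = y' ∧ G'.Adj x y ∧ o x y ∧ Hg.Adj i.1 j.1
    | _, _ => False)

/-- Disjoint union of two simple graphs. -/
def disjUnion {V W : Type*} (G : SimpleGraph V) (H : SimpleGraph W) :
    SimpleGraph (V ⊕ W) :=
  SimpleGraph.fromRel (fun z w =>
    match z, w with
    | Sum.inl a, Sum.inl b => G.Adj a b
    | Sum.inr a, Sum.inr b => H.Adj a b
    | _, _ => False)

/-- for `k ≥ 2`, `n ≥ 3` and `0 ≤ x, y ≤ kn - 2`, the gadget `K`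
has a `(kn-1, k)`-coloring `c` with `c a = x` and `c b = y` iff `x ≠ y`. -/
lemma gap_aux (k : ℤ) (hk : 0 < k) :
    ∀ m : ℕ, ∀ S : Finset ℤ, S.card = m → ∀ hS : S.Nonempty,
      (∀ a ∈ S, ∀ b ∈ S, a ≠ b → k ≤ |a - b|) →
      ((m : ℤ) - 1) * k ≤ S.max' hS - S.min' hS := by
  intro m
  induction m with
  | zero =>
    intro S hc hS _
    rw [Finset.card_eq_zero] at hc
    subst hc
    exact absurd hS (by simp)
  | succ m ih =>
    intro S hc hS h
    rcases Nat.eq_zero_or_pos m with hm | hm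
    · subst hm
      have := S.min'_le (S.max' hS) (S.max'_mem hS)
      simpa using by linarith
    · set M := S.max' hS with hM
      set S' := S.erase M with hS'def
      have hc' : S'.card = m := by
        rw [hS'def, Finset.card_erase_of_mem (S.max'_mem hS), hc]
        omega
      have hS' : S'.Nonempty := Finset.card_pos.mp (by omega)
      have hsub : S' ⊆ S := Finset.erase_subset _ _
      have hmaxS' : S'.max' hS' ∈ S := hsub (S'.max'_mem hS')
      have hneq : S'.max' hS' ≠ M := Finset.ne_of_mem_erase (S'.max'_mem hS')
      have hle : S'.max' hS' ≤ M := S.le_max' _ hmaxS'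
      have hkle : k ≤ M - S'.max' hS' := by
        have := h _ hmaxS' _ (S.max'_mem hS) hneq
        rw [abs_of_nonpos (by linarith)] at this
        linarith
      have hminmem : S.min' hS ∈ S' := by
        refine Finset.mem_erase.mpr ⟨?_, S.min'_mem hS⟩
        intro hEq
        have h1 := S.min'_le _ hmaxS'
        rw [hEq] at h1
        linarith
      have hmineq : S'.min' hS' = S.min' hS := by
        apply le_antisymm
        · exact S'.min'_le _ hminmem
        · exact S.min'_le _ (hsub (S'.min'_mem hS'))
      have := ih S' hc' hS' (fun a ha b hb hab => h a (hsub ha) b (hsub hb) hab)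
      rw [hmineq] at this
      push_cast
      linarith

lemma emod_neg_range (P t : ℤ) (h1 : -P ≤ t) (h2 : t < 0) : t % P = t + P := by
  rw [← Int.add_mul_emod_self_left (a := t) (b := P) (c := 1), mul_one]
  exact Int.emod_eq_of_lt (by linarith) (by linarith)

lemma circ_of_emod (P k a b : ℤ) (hP : 0 < P) (ha : 0 ≤ a) (ha' : a < P)
    (hb : 0 ≤ b) (hb' : b < P) (h1 : k ≤ (a - b) % P) (h2 : (a - b) % P ≤ P - k) :
    k ≤ |a - b| ∧ |a - b| ≤ P - k := by
  rcases le_or_gt b a with hba | hba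
  · rw [Int.emod_eq_of_lt (by linarith) (by linarith)] at h1 h2
    rw [abs_of_nonneg (by linarith)]
    exact ⟨h1, h2⟩
  · rw [emod_neg_range P _ (by linarith) (by linarith)] at h1 h2
    rw [abs_of_neg (by linarith)]
    constructor <;> linarith

set_option maxHeartbeats 2000000 in
theorem stmt_15 (k n : ℕ) (hk : 2 ≤ k) (hn : 3 ≤ n) (x y : ℕ)
    (hx : x ≤ k * n - 2) (hy : y ≤ k * n - 2) :
    (∃ c : Fin (n + 1) → ℕ, IsCircColoring (Kgadget n) (k * n - 1) k c ∧
      c 0 = x ∧ c 1 = y) ↔ x ≠ y := by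
  have hkn6 : 6 ≤ k * n := by nlinarith
  have hPcast : ((k * n - 1 : ℕ) : ℤ) = (k : ℤ) * n - 1 := by
    push_cast [Nat.cast_sub (by omega : 1 ≤ k * n)]
    ring
  set P : ℤ := (k : ℤ) * n - 1 with hPdef
  have hPpos : 0 < P := by
    have : (6 : ℤ) ≤ (k : ℤ) * n := by exact_mod_cast hkn6
    linarith
  have hk2 : (2 : ℤ) ≤ (k : ℤ) := by exact_mod_cast hk
  have hn3 : (3 : ℤ) ≤ (n : ℤ) := by exact_mod_cast hn
  have hxP : (x : ℤ) < P := by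
    have : (x : ℤ) ≤ ((k * n - 2 : ℕ) : ℤ) := by exact_mod_cast hx
    rw [Nat.cast_sub (by omega : 2 ≤ k * n)] at this
    push_cast at this
    linarith
  have hyP : (y : ℤ) < P := by
    have : (y : ℤ) ≤ ((k * n - 2 : ℕ) : ℤ) := by exact_mod_cast hy
    rw [Nat.cast_sub (by omega : 2 ≤ k * n)] at this
    push_cast at this
    linarith
  have hval1 : (1 : Fin (n + 1)).val = 1 := by
    rw [Fin.val_one', Nat.mod_eq_of_lt (by omega)]
  have h3k : 3 * (k:ℤ) ≤ (k:ℤ) * n := by nlinarith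
  have hval0 : (0 : Fin (n + 1)).val = 0 := rfl
  constructor
  · rintro ⟨c, ⟨hlt, hadj⟩, h0, h1⟩ hxy
    -- x = y leads to contradiction
    have hc01 : c 0 = c 1 := by rw [h0, h1, hxy]
    -- pairwise bounds on V \ {1}
    have pairwise : ∀ u w : Fin (n + 1), u.val ≠ 1 → w.val ≠ 1 → u ≠ w →
        (k : ℤ) ≤ |(c u : ℤ) - c w| ∧ |(c u : ℤ) - c w| ≤ P - k := by
      intro u w hu1 hw1 huw
      have hvne : u.val ≠ w.val := fun h => huw (Fin.ext h)
      have hadj' : ∀ u' w' : Fin (n+1), (Kgadget n).Adj u' w' →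
          (k : ℤ) ≤ |(c u' : ℤ) - c w'| ∧ |(c u' : ℤ) - c w'| ≤ P - k := by
        intro u' w' ha
        have := hadj ha
        rw [hPcast] at this
        exact this
      have hadjr : ∀ u' w' : Fin (n+1), u' ≠ w' →
          ((2 ≤ u'.val ∧ 2 ≤ w'.val) ∨ (u'.val = 0 ∧ 2 ≤ w'.val ∧ w'.val ≤ n - 1) ∨
            (u'.val = 1 ∧ w'.val = n)) → (Kgadget n).Adj u' w' := by
        intro u' w' h1' h2'
        exact (SimpleGraph.fromRel_adj _ _ _).mpr ⟨h1', Or.inl h2'⟩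
      rcases Nat.lt_or_ge u.val 2 with hu2 | hu2
      · -- u.val = 0
        have hu0 : u.val = 0 := by omega
        rcases Nat.lt_or_ge w.val 2 with hw2 | hw2
        · omega
        · rcases Nat.lt_or_ge w.val n with hwn | hwn
          · exact hadj' u w (hadjr u w huw (Or.inr (Or.inl ⟨hu0, hw2, by omega⟩)))
          · -- w.val = n : use c 0 = c 1 and edge 1-w
            have hwn' : w.val = n := by omega
            have hu : u = 0 := Fin.ext (by simpa using hu0)
            have hne1w : (1 : Fin (n+1)) ≠ w := by
              intro h; rw [← h, hval1] at hwn'; omega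
            have := hadj' 1 w (hadjr 1 w hne1w (Or.inr (Or.inr ⟨hval1, hwn'⟩)))
            rw [← hc01, ← hu] at this
            exact this
      · rcases Nat.lt_or_ge w.val 2 with hw2 | hw2
        · -- w.val = 0, symmetric
          have hw0 : w.val = 0 := by omega
          have key : (k : ℤ) ≤ |(c w : ℤ) - c u| ∧ |(c w : ℤ) - c u| ≤ P - k := by
            rcases Nat.lt_or_ge u.val n with hun | hun
            · exact hadj' w u (hadjr w u (Ne.symm huw) (Or.inr (Or.inl ⟨hw0, hu2, by omega⟩)))
            · have hun' : u.val = n := by omega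
              have hw : w = 0 := Fin.ext (by simpa using hw0)
              have hne1u : (1 : Fin (n+1)) ≠ u := by
                intro h; rw [← h, hval1] at hun'; omega
              have := hadj' 1 u (hadjr 1 u hne1u (Or.inr (Or.inr ⟨hval1, hun'⟩)))
              rw [← hc01, ← hw] at this
              exact this
          rw [abs_sub_comm] at key
          exact key
        · exact hadj' u w (hadjr u w huw (Or.inl ⟨hu2, hw2⟩))
    -- build the finset
    set T : Finset (Fin (n+1)) := Finset.univ.erase 1 with hTdef
    set S : Finset ℤ := T.image (fun v => (c v : ℤ)) with hSdef
    have hinjT : Set.InjOn (fun v => (c v : ℤ)) T := by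
      intro u hu w hw hEq
      have hEq' : ((c u : ℕ) : ℤ) = ((c w : ℕ) : ℤ) := hEq
      by_contra huw
      have hu1 : u.val ≠ 1 := by
        intro h
        exact (Finset.mem_erase.mp hu).1 (Fin.ext (by rw [h, hval1]))
      have hw1 : w.val ≠ 1 := by
        intro h
        exact (Finset.mem_erase.mp hw).1 (Fin.ext (by rw [h, hval1]))
      have := (pairwise u w hu1 hw1 huw).1
      rw [hEq'] at this
      simp at this
      linarith
    have hScard : S.card = n := by
      rw [hSdef, Finset.card_image_of_injOn hinjT, hTdef,
        Finset.card_erase_of_mem (Finset.mem_univ _), Finset.card_univ, Fintype.card_fin]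
      omega
    have hSne : S.Nonempty := by
      rw [← Finset.card_pos, hScard]; omega
    have hmem : ∀ a ∈ S, ∃ v : Fin (n+1), v.val ≠ 1 ∧ (c v : ℤ) = a := by
      intro a ha
      rw [hSdef, Finset.mem_image] at ha
      obtain ⟨v, hv, hva⟩ := ha
      refine ⟨v, ?_, hva⟩
      intro h
      exact (Finset.mem_erase.mp hv).1 (Fin.ext (by rw [h, hval1]))
    have hgap := gap_aux k (by linarith) n S hScard hSne ?_
    · obtain ⟨u, hu1, hu⟩ := hmem _ (S.max'_mem hSne)
      obtain ⟨w, hw1, hw⟩ := hmem _ (S.min'_mem hSne)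
      have hMm : S.max' hSne - S.min' hSne ≤ P - k := by
        by_cases huw : u = w
        · rw [← hu, ← hw, huw]
          linarith
        · have := (pairwise u w hu1 hw1 huw).2
          rw [hu, hw] at this
          calc S.max' hSne - S.min' hSne ≤ |S.max' hSne - S.min' hSne| := le_abs_self _
            _ ≤ P - k := this
      nlinarith
    · intro a ha b hb hab
      obtain ⟨u, hu1, hu⟩ := hmem _ ha
      obtain ⟨w, hw1, hw⟩ := hmem _ hb
      have huw : u ≠ w := by rintro rfl; rw [hu] at hw; exact hab (hw ▸ rfl)
      have := (pairwise u w hu1 hw1 huw).1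
      rw [hu, hw] at this
      exact this
  · -- construction
    intro hxy
    set d : ℤ := ((y : ℤ) - x) % P with hddef
    have hd0 : 0 ≤ d := Int.emod_nonneg _ (by linarith)
    have hdP : d < P := Int.emod_lt_of_pos _ hPpos
    have hd1 : 1 ≤ d := by
      rcases le_or_gt (x : ℤ) y with hle | hlt
      · rw [hddef, Int.emod_eq_of_lt (by linarith) (by linarith)]
        have : (x : ℤ) ≠ y := by exact_mod_cast fun h => hxy (by exact_mod_cast h)
        omega
      · rw [hddef, emod_neg_range P _ (by linarith) (by linarith)]
        linarith
    set o : Fin (n + 1) → ℤ := fun v =>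
      if v.val = 0 then 0
      else if v.val = 1 then d
      else if v.val = n then
        (if d ≤ P - k then (if (k : ℤ) ≤ d then 0 else P - ((k : ℤ) - 1)) else (k : ℤ) - 1)
      else (if d ≤ P - k then ((v.val : ℤ) - 1) * k else P - ((v.val : ℤ) - 1) * k)
      with hodef
    have oA : ∀ v : Fin (n+1), v.val = 0 → o v = 0 := by
      intro v hv; simp [hodef, hv, -Fin.val_eq_zero_iff]
    have oB : ∀ v : Fin (n+1), v.val = 1 → o v = d := by
      intro v hv; simp [hodef, hv, -Fin.val_eq_zero_iff]
    have oC : ∀ v : Fin (n+1), 2 ≤ v.val → v.val ≠ n →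
        o v = if d ≤ P - k then ((v.val : ℤ) - 1) * k else P - ((v.val : ℤ) - 1) * k := by
      intro v h1 h2
      have e0 : v.val ≠ 0 := by omega
      have e1 : v.val ≠ 1 := by omega
      simp [hodef, e0, e1, h2, -Fin.val_eq_zero_iff]
    have oD : ∀ v : Fin (n+1), v.val = n →
        o v = if d ≤ P - k then (if (k:ℤ) ≤ d then 0 else P - ((k:ℤ) - 1)) else (k:ℤ) - 1 := by
      intro v hv
      have e0 : n ≠ 0 := by omega
      have e1 : n ≠ 1 := by omega
      simp [hodef, hv, e0, e1, -Fin.val_eq_zero_iff]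
    -- ranges of o are irrelevant; colors via mod
    set c : Fin (n + 1) → ℕ := fun v => (((x : ℤ) + o v) % P).toNat with hcdef
    have hcval : ∀ v, ((c v : ℤ)) = ((x : ℤ) + o v) % P := by
      intro v
      rw [hcdef]
      exact Int.toNat_of_nonneg (Int.emod_nonneg _ (by linarith))
    have pos_case : ∀ t : ℤ, (k:ℤ) ≤ t → t ≤ P - k → (k:ℤ) ≤ t % P ∧ t % P ≤ P - k := by
      intro t h1 h2
      rw [Int.emod_eq_of_lt (by linarith) (by linarith)]
      exact ⟨h1, h2⟩
    have neg_case : ∀ t : ℤ, (k:ℤ) ≤ t + P → t + P ≤ P - k → (k:ℤ) ≤ t % P ∧ t % P ≤ P - k := by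
      intro t h1 h2
      rw [emod_neg_range P t (by linarith) (by linarith)]
      exact ⟨h1, h2⟩
    have hmul : ∀ z v : ℤ, z ≤ v → z * (k:ℤ) ≤ v * k :=
      fun z v h => mul_le_mul_of_nonneg_right h (by linarith)
    -- the modular condition on each directed related pair
    have modOK : ∀ u w : Fin (n+1), u.val ≠ w.val →
        ((2 ≤ u.val ∧ 2 ≤ w.val) ∨ (u.val = 0 ∧ 2 ≤ w.val ∧ w.val ≤ n - 1) ∨
          (u.val = 1 ∧ w.val = n)) →
        (k:ℤ) ≤ (o u - o w) % P ∧ (o u - o w) % P ≤ P - k := by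
      intro u w hne hr
      have hun : u.val ≤ n := by omega
      have hwn : w.val ≤ n := by omega
      rcases hr with ⟨hu2, hw2⟩ | ⟨hu0, hw2, hwn1⟩ | ⟨hu1, hwEq⟩
      · -- both ≥ 2
        by_cases hun' : u.val = n
        · -- u = n, w ∈ [2, n-1]
          have hwlt : w.val ≤ n - 1 := by omega
          have hwz : (2:ℤ) ≤ w.val := by exact_mod_cast hw2
          have hwz' : (w.val : ℤ) ≤ (n:ℤ) - 1 := by
            have : (w.val:ℤ) ≤ ((n-1 : ℕ):ℤ) := by exact_mod_cast hwlt
            rw [Nat.cast_sub (by omega)] at this; push_cast at this; linarith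
          rw [oD u hun', oC w hw2 (by omega)]
          by_cases hasc : d ≤ P - k
          · by_cases hkd : (k:ℤ) ≤ d
            · rw [if_pos hasc, if_pos hkd, if_pos hasc]
              apply neg_case
              · linarith [hmul 1 ((w.val:ℤ)-1) (by linarith), hmul ((w.val:ℤ)-1) ((n:ℤ)-2) (by linarith), h3k]
              · linarith [hmul 1 ((w.val:ℤ)-1) (by linarith), hmul ((w.val:ℤ)-1) ((n:ℤ)-2) (by linarith), h3k]
            · rw [if_pos hasc, if_neg hkd, if_pos hasc]
              apply pos_case
              · linarith [hmul 1 ((w.val:ℤ)-1) (by linarith), hmul ((w.val:ℤ)-1) ((n:ℤ)-2) (by linarith), h3k]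
              · linarith [hmul 1 ((w.val:ℤ)-1) (by linarith), hmul ((w.val:ℤ)-1) ((n:ℤ)-2) (by linarith), h3k]
          · rw [if_neg hasc, if_neg hasc]
            apply neg_case
            · linarith [hmul 1 ((w.val:ℤ)-1) (by linarith), hmul ((w.val:ℤ)-1) ((n:ℤ)-2) (by linarith), h3k]
            · linarith [hmul 1 ((w.val:ℤ)-1) (by linarith), hmul ((w.val:ℤ)-1) ((n:ℤ)-2) (by linarith), h3k]
        · by_cases hwn' : w.val = n
          · -- w = n, u ∈ [2, n-1]
            have hult : u.val ≤ n - 1 := by omega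
            have huz : (2:ℤ) ≤ u.val := by exact_mod_cast hu2
            have huz' : (u.val : ℤ) ≤ (n:ℤ) - 1 := by
              have : (u.val:ℤ) ≤ ((n-1 : ℕ):ℤ) := by exact_mod_cast hult
              rw [Nat.cast_sub (by omega)] at this; push_cast at this; linarith
            rw [oD w hwn', oC u hu2 hun']
            by_cases hasc : d ≤ P - k
            · by_cases hkd : (k:ℤ) ≤ d
              · rw [if_pos hasc, if_pos hkd, if_pos hasc]
                apply pos_case
                · linarith [hmul 1 ((u.val:ℤ)-1) (by linarith), hmul ((u.val:ℤ)-1) ((n:ℤ)-2) (by linarith), h3k]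
                · linarith [hmul 1 ((u.val:ℤ)-1) (by linarith), hmul ((u.val:ℤ)-1) ((n:ℤ)-2) (by linarith), h3k]
              · rw [if_pos hasc, if_neg hkd, if_pos hasc]
                apply neg_case
                · linarith [hmul 1 ((u.val:ℤ)-1) (by linarith), hmul ((u.val:ℤ)-1) ((n:ℤ)-2) (by linarith), h3k]
                · linarith [hmul 1 ((u.val:ℤ)-1) (by linarith), hmul ((u.val:ℤ)-1) ((n:ℤ)-2) (by linarith), h3k]
            · rw [if_neg hasc, if_neg hasc]
              apply pos_case
              · linarith [hmul 1 ((u.val:ℤ)-1) (by linarith), hmul ((u.val:ℤ)-1) ((n:ℤ)-2) (by linarith), h3k]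
              · linarith [hmul 1 ((u.val:ℤ)-1) (by linarith), hmul ((u.val:ℤ)-1) ((n:ℤ)-2) (by linarith), h3k]
          · -- both in [2, n-1]
            have huz : (2:ℤ) ≤ u.val := by exact_mod_cast hu2
            have hwz : (2:ℤ) ≤ w.val := by exact_mod_cast hw2
            have huz' : (u.val : ℤ) ≤ (n:ℤ) - 1 := by
              have h' : u.val ≤ n - 1 := by omega
              have : (u.val:ℤ) ≤ ((n-1 : ℕ):ℤ) := by exact_mod_cast h'
              rw [Nat.cast_sub (by omega)] at this; push_cast at this; linarith
            have hwz' : (w.val : ℤ) ≤ (n:ℤ) - 1 := by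
              have h' : w.val ≤ n - 1 := by omega
              have : (w.val:ℤ) ≤ ((n-1 : ℕ):ℤ) := by exact_mod_cast h'
              rw [Nat.cast_sub (by omega)] at this; push_cast at this; linarith
            have hnez : (u.val : ℤ) ≠ (w.val : ℤ) := by exact_mod_cast hne
            rw [oC u hu2 hun', oC w hw2 hwn']
            by_cases hasc : d ≤ P - k
            · rw [if_pos hasc, if_pos hasc]
              rcases lt_or_gt_of_ne hnez with hlt | hgt
              · apply neg_case
                · linarith [hmul 1 ((w.val:ℤ)-(u.val:ℤ)) (by linarith), hmul ((w.val:ℤ)-(u.val:ℤ)) ((n:ℤ)-3) (by linarith), h3k]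
                · linarith [hmul 1 ((w.val:ℤ)-(u.val:ℤ)) (by linarith), hmul ((w.val:ℤ)-(u.val:ℤ)) ((n:ℤ)-3) (by linarith), h3k]
              · apply pos_case
                · linarith [hmul 1 ((u.val:ℤ)-(w.val:ℤ)) (by linarith), hmul ((u.val:ℤ)-(w.val:ℤ)) ((n:ℤ)-3) (by linarith), h3k]
                · linarith [hmul 1 ((u.val:ℤ)-(w.val:ℤ)) (by linarith), hmul ((u.val:ℤ)-(w.val:ℤ)) ((n:ℤ)-3) (by linarith), h3k]
            · rw [if_neg hasc, if_neg hasc]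
              rcases lt_or_gt_of_ne hnez with hlt | hgt
              · apply pos_case
                · linarith [hmul 1 ((w.val:ℤ)-(u.val:ℤ)) (by linarith), hmul ((w.val:ℤ)-(u.val:ℤ)) ((n:ℤ)-3) (by linarith), h3k]
                · linarith [hmul 1 ((w.val:ℤ)-(u.val:ℤ)) (by linarith), hmul ((w.val:ℤ)-(u.val:ℤ)) ((n:ℤ)-3) (by linarith), h3k]
              · apply neg_case
                · linarith [hmul 1 ((u.val:ℤ)-(w.val:ℤ)) (by linarith), hmul ((u.val:ℤ)-(w.val:ℤ)) ((n:ℤ)-3) (by linarith), h3k]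
                · linarith [hmul 1 ((u.val:ℤ)-(w.val:ℤ)) (by linarith), hmul ((u.val:ℤ)-(w.val:ℤ)) ((n:ℤ)-3) (by linarith), h3k]
      · -- u = 0, w ∈ [2, n-1]
        have hwz : (2:ℤ) ≤ w.val := by exact_mod_cast hw2
        have hwz' : (w.val : ℤ) ≤ (n:ℤ) - 1 := by
          have : (w.val:ℤ) ≤ ((n-1 : ℕ):ℤ) := by exact_mod_cast hwn1
          rw [Nat.cast_sub (by omega)] at this; push_cast at this; linarith
        rw [oA u hu0, oC w hw2 (by omega)]
        by_cases hasc : d ≤ P - k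
        · rw [if_pos hasc]
          apply neg_case
          · linarith [hmul 1 ((w.val:ℤ)-1) (by linarith), hmul ((w.val:ℤ)-1) ((n:ℤ)-2) (by linarith), h3k]
          · linarith [hmul 1 ((w.val:ℤ)-1) (by linarith), hmul ((w.val:ℤ)-1) ((n:ℤ)-2) (by linarith), h3k]
        · rw [if_neg hasc]
          apply neg_case
          · linarith [hmul 1 ((w.val:ℤ)-1) (by linarith), hmul ((w.val:ℤ)-1) ((n:ℤ)-2) (by linarith), h3k]
          · linarith [hmul 1 ((w.val:ℤ)-1) (by linarith), hmul ((w.val:ℤ)-1) ((n:ℤ)-2) (by linarith), h3k]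
      · -- u = 1, w = n
        rw [oB u hu1, oD w hwEq]
        by_cases hasc : d ≤ P - k
        · by_cases hkd : (k:ℤ) ≤ d
          · rw [if_pos hasc, if_pos hkd]
            apply pos_case
            · linarith [h3k]
            · linarith [h3k]
          · rw [if_pos hasc, if_neg hkd]
            apply neg_case
            · linarith [h3k]
            · linarith [h3k]
        · rw [if_neg hasc]
          apply pos_case
          · linarith [h3k]
          · linarith [h3k]
    -- assemble
    refine ⟨c, ⟨?_, ?_⟩, ?_, ?_⟩
    · intro v
      have h1 := Int.emod_lt_of_pos ((x:ℤ) + o v) hPpos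
      have h2 := Int.emod_nonneg ((x:ℤ) + o v) (by linarith : P ≠ 0)
      rw [← Nat.cast_lt (α := ℤ), hPcast]
      calc ((c v : ℕ) : ℤ) = ((x:ℤ) + o v) % P := hcval v
        _ < P := h1
    · intro u w hadj
      obtain ⟨hne, hr⟩ := (SimpleGraph.fromRel_adj _ u w).mp hadj
      have hvne : u.val ≠ w.val := fun h => hne (Fin.ext h)
      rw [hPcast, hcval u, hcval w]
      have key : ∀ u' w' : Fin (n+1), u'.val ≠ w'.val →
          ((2 ≤ u'.val ∧ 2 ≤ w'.val) ∨ (u'.val = 0 ∧ 2 ≤ w'.val ∧ w'.val ≤ n - 1) ∨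
            (u'.val = 1 ∧ w'.val = n)) →
          (k:ℤ) ≤ |((x:ℤ) + o u') % P - ((x:ℤ) + o w') % P| ∧
            |((x:ℤ) + o u') % P - ((x:ℤ) + o w') % P| ≤ P - k := by
        intro u' w' h1' h2'
        have hmod := modOK u' w' h1' h2'
        have heq : (((x:ℤ) + o u') % P - ((x:ℤ) + o w') % P) % P = (o u' - o w') % P := by
          rw [← Int.sub_emod]
          congr 1
          ring
        apply circ_of_emod P k _ _ hPpos (Int.emod_nonneg _ (by linarith))
          (Int.emod_lt_of_pos _ hPpos) (Int.emod_nonneg _ (by linarith))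
          (Int.emod_lt_of_pos _ hPpos) (heq ▸ hmod.1) (heq ▸ hmod.2)
      rcases hr with hr | hr
      · exact key u w hvne hr
      · have := key w u (Ne.symm hvne) hr
        rwa [abs_sub_comm] at this
    · -- c 0 = x
      rw [← Nat.cast_inj (R := ℤ), hcval 0, oA 0 hval0, add_zero,
        Int.emod_eq_of_lt (by positivity) hxP]
    · -- c 1 = y
      rw [← Nat.cast_inj (R := ℤ), hcval 1, oB 1 hval1, hddef]
      rw [Int.add_emod ((x:ℤ)) _ P, Int.emod_emod_of_dvd _ dvd_rfl, ← Int.add_emod]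
      have : (x:ℤ) + ((y:ℤ) - x) = y := by ring
      rw [this, Int.emod_eq_of_lt (by positivity) hyP]
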